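/- Let n ≥ 1 and l ∈ {1,…,n}, and let X_{n,l} be the depth of the node containing l in the random binary search tree built from a uniformly random permutation of {1,…,n}. Then E X_{n,l} = H_l + H_{n+1−l} − 2; equivalently, E(1 + X_{n,l}) = H_l + H_{n+1−l} − 1 (Arora–Dent formula). -/

import Mathlib

open MeasureTheory ProbabilityTheory Finset Filter
open scoped ENNReal NNReal

noncomputable section

/-- The `k`-th harmonic number `H_k = ∑_{i=1}^k 1/i`, with `H_0 = 0`. -/
def harm (k : ℕ) : ℝ := ∑ i ∈ Finset.range k, (1 : ℝ) / (i + 1)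

instance (n : ℕ) : MeasurableSpace (Equiv.Perm (Fin n)) := ⊤

/-- The uniform distribution on the permutations of `{1,…,n}`. -/
def uniformPerm (n : ℕ) : Measure (Equiv.Perm (Fin n)) :=
  (PMF.uniformOfFintype (Equiv.Perm (Fin n))).toMeasure

/-- The (1-based) position `N = π⁻¹(l)` of the key `l` in the permutation `π`
(positions are `i+1` for `i : Fin n`, values are `π i + 1`). -/
def bstN (n l : ℕ) (π : Equiv.Perm (Fin n)) : ℕ :=
  1 + ∑ i : Fin n, if (π i : ℕ) + 1 = l then (i : ℕ) else 0

open scoped Classical in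
/-- `R₋`: the number of ascending records in the subpermutation of values `< l`
appearing before the position of `l`. -/
def bstRminus (n l : ℕ) (π : Equiv.Perm (Fin n)) : ℕ :=
  (Finset.univ.filter fun r : Fin n =>
    (r : ℕ) + 1 < bstN n l π ∧ (π r : ℕ) + 1 < l ∧
      ∀ k : Fin n, k < r → (π k : ℕ) + 1 < l → π k < π r).card

open scoped Classical in
/-- `R₊`: the number of descending records in the subpermutation of values `> l`
appearing before the position of `l`. -/
def bstRplus (n l : ℕ) (π : Equiv.Perm (Fin n)) : ℕ :=
  (Finset.univ.filter fun r : Fin n =>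
    (r : ℕ) + 1 < bstN n l π ∧ (π r : ℕ) + 1 > l ∧
      ∀ k : Fin n, k < r → (π k : ℕ) + 1 > l → π r < π k).card

/-- `X_{n,l} = R₋ + R₊`: the depth of the node containing `l` in the binary search
tree built from the permutation `π` of `{1,…,n}`. -/
def bstDepth (n l : ℕ) (π : Equiv.Perm (Fin n)) : ℕ :=
  bstRminus n l π + bstRplus n l π

open scoped Classical in
/-- `G = #{1 ≤ i < N : π(i) < l}`. -/
def bstG (n l : ℕ) (π : Equiv.Perm (Fin n)) : ℕ :=
  (Finset.univ.filter fun i : Fin n =>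
    (i : ℕ) + 1 < bstN n l π ∧ (π i : ℕ) + 1 < l).card

/-- The expectation `E X_{n,l}` of the depth of the node containing `l`. -/
def bstExp (n l : ℕ) : ℝ := ∫ π, (bstDepth n l π : ℝ) ∂(uniformPerm n)

/-- The hypergeometric probability mass function: for `X ~ HypGeo(N; M, n)`,
`P(X = k) = C(M,k)·C(N−M,n−k)/C(N,n)` for `0 ≤ k ≤ n` (and `0` otherwise). -/
def hypPMF (N M n k : ℕ) : ℝ :=
  if k ≤ n then (M.choose k * (N - M).choose (n - k) : ℝ) / (N.choose n) else 0

/-- Total variation distance between (probability) measures on `ℕ`. -/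
def dTV (μ ν : Measure ℕ) : ℝ := ⨆ A : Set ℕ, |(μ A).toReal - (ν A).toReal|

/-- The Wasserstein-type distance `d_W` of Barbour–Holst–Janson: the supremum of
`|∫ f dμ − ∫ f dν|` over measurable `f` with `|f(x) − f(y)| ≤ 1` whenever `|x − y| ≤ 1`. -/
def dW (μ ν : Measure ℝ) : ℝ :=
  sSup { d : ℝ | ∃ f : ℝ → ℝ, Measurable f ∧ (∀ x y, |x - y| ≤ 1 → |f x - f y| ≤ 1) ∧
    d = |∫ x, f x ∂μ - ∫ x, f x ∂ν| }

/-- The mixed Poisson distribution with mixing measure `ν`: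
`MixPo(ν)({k}) = ∫ e^{−λ} λ^k / k! ν(dλ)`. -/
def mixPo (ν : Measure ℝ) : Measure ℕ :=
  Measure.sum fun k =>
    (∫⁻ l, ENNReal.ofReal (Real.exp (-l) * l ^ k / k.factorial) ∂ν) • Measure.dirac k

/-- The standard normal cumulative distribution function `Φ`. -/
def stdNormalCDF (x : ℝ) : ℝ :=
  (1 / Real.sqrt (2 * Real.pi)) * ∫ y in Set.Iic x, Real.exp (-y ^ 2 / 2)

end
noncomputable section
namespace AD
open Finset Equiv
open scoped Classical

variable {n : ℕ}

def firstIn (S : Finset (Fin n)) (a : Fin n) (π : Equiv.Perm (Fin n)) : Prop :=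
  ∀ b ∈ S, b ≠ a → π⁻¹ a < π⁻¹ b

lemma card_firstIn_swap (S : Finset (Fin n)) {a s : Fin n} (ha : a ∈ S) (hs : s ∈ S) :
    (univ.filter fun π : Perm (Fin n) => firstIn S a π).card
      = (univ.filter fun π : Perm (Fin n) => firstIn S s π).card := by
  rcases eq_or_ne a s with rfl | hne
  · rfl
  have key : ∀ (x y : Fin n), x ∈ S → y ∈ S → x ≠ y →
      ∀ π : Perm (Fin n), firstIn S x π → firstIn S y (Equiv.swap x y * π) := by
    intro x y hx hy hxy π hπ b hb hby
    have hinv : (Equiv.swap x y * π)⁻¹ = π⁻¹ * Equiv.swap x y := by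
      rw [mul_inv_rev, Equiv.swap_inv]
    rw [hinv]
    simp only [Equiv.Perm.mul_apply]
    rw [Equiv.swap_apply_right]
    rcases eq_or_ne b x with rfl | hbx
    · rw [Equiv.swap_apply_left]
      exact hπ y hy (Ne.symm hxy)
    · rw [Equiv.swap_apply_of_ne_of_ne hbx hby]
      exact hπ b hb hbx
  refine Finset.card_bij' (fun π _ => Equiv.swap a s * π) (fun π _ => Equiv.swap a s * π)
    ?_ ?_ ?_ ?_
  · intro π hπ
    simp only [mem_filter, mem_univ, true_and] at hπ ⊢
    exact key a s ha hs hne π hπ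
  · intro π hπ
    simp only [mem_filter, mem_univ, true_and] at hπ ⊢
    have := key s a hs ha (Ne.symm hne) π hπ
    rwa [Equiv.swap_comm] at this
  · intro π _; simp [← mul_assoc]
  · intro π _; simp [← mul_assoc]

lemma unique_firstIn (S : Finset (Fin n)) (hS : S.Nonempty) (π : Perm (Fin n)) :
    (S.filter fun s => firstIn S s π).card = 1 := by
  obtain ⟨s₀, hs₀, hmin⟩ := S.exists_min_image (fun b => π⁻¹ b) hS
  rw [Finset.card_eq_one]
  refine ⟨s₀, ?_⟩
  ext s
  simp only [mem_filter, mem_singleton]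
  constructor
  · rintro ⟨hsS, hfirst⟩
    by_contra hne
    exact absurd (hmin s hsS) (not_le.mpr (hfirst s₀ hs₀ (fun h => hne h.symm)))
  · rintro rfl
    refine ⟨hs₀, fun b hb hbne => lt_of_le_of_ne (hmin b hb) fun h => hbne (π⁻¹.injective h.symm)⟩

lemma card_firstIn_mul (S : Finset (Fin n)) {a : Fin n} (ha : a ∈ S) :
    (univ.filter fun π : Perm (Fin n) => firstIn S a π).card * S.card
      = Fintype.card (Perm (Fin n)) := by
  have h1 : ∑ s ∈ S, (univ.filter fun π : Perm (Fin n) => firstIn S s π).card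
      = Fintype.card (Perm (Fin n)) := by
    calc ∑ s ∈ S, (univ.filter fun π : Perm (Fin n) => firstIn S s π).card
        = ∑ s ∈ S, ∑ π : Perm (Fin n), if firstIn S s π then 1 else 0 := by
          simp only [Finset.card_filter]
      _ = ∑ π : Perm (Fin n), ∑ s ∈ S, if firstIn S s π then 1 else 0 := Finset.sum_comm
      _ = ∑ π : Perm (Fin n), (S.filter fun s => firstIn S s π).card := by
          simp only [Finset.card_filter]
      _ = ∑ _π : Perm (Fin n), 1 := by
          refine Finset.sum_congr rfl fun π _ => unique_firstIn S ⟨a, ha⟩ π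
      _ = Fintype.card (Perm (Fin n)) := by simp
  rw [← h1, Finset.sum_congr rfl fun s hs => (card_firstIn_swap S hs ha), Finset.sum_const,
    smul_eq_mul, mul_comm]

lemma bstN_eq {l : ℕ} (hl1 : 1 ≤ l) (hln : l ≤ n) (π : Equiv.Perm (Fin n)) :
    bstN n l π = 1 + (π⁻¹ ⟨l - 1, by omega⟩ : ℕ) := by
  unfold bstN
  congr 1
  rw [Finset.sum_eq_single (π⁻¹ ⟨l - 1, by omega⟩)]
  · rw [if_pos]; simp; omega
  · intro i _ hne
    rw [if_neg]
    intro h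
    apply hne
    have : π i = ⟨l - 1, by omega⟩ := Fin.ext (by simp; omega)
    rw [← this]; simp
  · simp

lemma bstRminus_eq {l : ℕ} (hl1 : 1 ≤ l) (hln : l ≤ n) (π : Equiv.Perm (Fin n)) :
    bstRminus n l π = (univ.filter fun a : Fin n =>
      (a : ℕ) + 1 < l ∧ firstIn (Finset.Icc a ⟨l - 1, by omega⟩) a π).card := by
  set la : Fin n := ⟨l - 1, by omega⟩ with hla
  have hN : bstN n l π = 1 + ((π⁻¹ la : Fin n) : ℕ) := bstN_eq hl1 hln π
  have hlaval : (la : ℕ) = l - 1 := rfl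
  unfold bstRminus
  refine Finset.card_bij' (fun r _ => π r) (fun a _ => π⁻¹ a) ?_ ?_ ?_ ?_
  · intro r hr
    simp only [mem_filter, mem_univ, true_and] at hr ⊢
    obtain ⟨hrN, hrl, hrec⟩ := hr
    refine ⟨hrl, ?_⟩
    intro b hb hbne
    rw [(show ∀ x, π⁻¹ (π x) = x from fun x => by simp), Finset.mem_Icc] at *
    obtain ⟨hab, hbla⟩ := hb
    rcases eq_or_ne b la with rfl | hbla'
    · rw [Fin.lt_def]; omega
    · have hbl : (b : ℕ) + 1 < l := by
        have : (b : ℕ) < (la : ℕ) := lt_of_le_of_ne hbla (fun h => hbla' (Fin.ext h))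
        omega
      by_contra hcon
      have hkr : π⁻¹ b < r := by
        rcases lt_trichotomy (π⁻¹ b) r with h | h | h
        · exact h
        · exact absurd (by rw [← h]; simp) hbne
        · exact absurd h hcon
      have := hrec (π⁻¹ b) hkr (by simpa using hbl)
      simp only [(show ∀ x, π (π⁻¹ x) = x from fun x => by simp)] at this
      exact absurd this (not_lt.mpr (le_of_lt (lt_of_le_of_ne hab (Ne.symm hbne))))
  · intro a ha
    simp only [mem_filter, mem_univ, true_and] at ha ⊢
    obtain ⟨hal, hfirst⟩ := ha
    have hala : a < la := by rw [Fin.lt_def]; omega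
    have h1 : π⁻¹ a < π⁻¹ la :=
      hfirst la (Finset.mem_Icc.mpr ⟨le_of_lt hala, le_refl la⟩) (ne_of_gt hala)
    refine ⟨by rw [hN]; rw [Fin.lt_def] at h1; omega, by simpa using hal, ?_⟩
    intro k hk hkl
    simp only [(show ∀ x, π (π⁻¹ x) = x from fun x => by simp)]
    by_contra hcon
    have hkne : π k ≠ a := by
      intro h
      have hh : π⁻¹ a = k := by rw [← h]; simp
      rw [hh] at hk; exact lt_irrefl _ hk
    have hak : a < π k := lt_of_le_of_ne (not_lt.mp hcon) (Ne.symm hkne)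
    have hkla : π k ≤ la := by rw [Fin.le_def]; omega
    have := hfirst (π k) (Finset.mem_Icc.mpr ⟨le_of_lt hak, hkla⟩) (ne_of_gt hak)
    simp only [(show ∀ x, π⁻¹ (π x) = x from fun x => by simp)] at this
    exact absurd hk (not_lt.mpr (le_of_lt this))
  · intro r _; simp
  · intro a _; simp

lemma bstRplus_eq {l : ℕ} (hl1 : 1 ≤ l) (hln : l ≤ n) (π : Equiv.Perm (Fin n)) :
    bstRplus n l π = (univ.filter fun a : Fin n =>
      l ≤ (a : ℕ) ∧ firstIn (Finset.Icc ⟨l - 1, by omega⟩ a) a π).card := by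
  set la : Fin n := ⟨l - 1, by omega⟩ with hla
  have hN : bstN n l π = 1 + ((π⁻¹ la : Fin n) : ℕ) := bstN_eq hl1 hln π
  have hlaval : (la : ℕ) = l - 1 := rfl
  unfold bstRplus
  refine Finset.card_bij' (fun r _ => π r) (fun a _ => π⁻¹ a) ?_ ?_ ?_ ?_
  · intro r hr
    simp only [mem_filter, mem_univ, true_and] at hr ⊢
    obtain ⟨hrN, hrl, hrec⟩ := hr
    refine ⟨by omega, ?_⟩
    intro b hb hbne
    rw [(show ∀ x, π⁻¹ (π x) = x from fun x => by simp)] at *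
    rw [Finset.mem_Icc] at hb
    obtain ⟨hlab, hba⟩ := hb
    rcases eq_or_ne b la with rfl | hbla'
    · rw [Fin.lt_def]; omega
    · have hbl : (b : ℕ) + 1 > l := by
        have : (la : ℕ) < (b : ℕ) := lt_of_le_of_ne hlab (fun h => hbla' (Fin.ext h.symm))
        omega
      by_contra hcon
      have hkr : π⁻¹ b < r := by
        rcases lt_trichotomy (π⁻¹ b) r with h | h | h
        · exact h
        · exact absurd (by rw [← h]; simp) hbne
        · exact absurd h hcon
      have := hrec (π⁻¹ b) hkr (by simpa using hbl)
      simp only [(show ∀ x, π (π⁻¹ x) = x from fun x => by simp)] at this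
      exact absurd this (not_lt.mpr (le_of_lt (lt_of_le_of_ne hba hbne)))
  · intro a ha
    simp only [mem_filter, mem_univ, true_and] at ha ⊢
    obtain ⟨hal, hfirst⟩ := ha
    have hala : la < a := by rw [Fin.lt_def]; omega
    have h1 : π⁻¹ a < π⁻¹ la :=
      hfirst la (Finset.mem_Icc.mpr ⟨le_refl la, le_of_lt hala⟩) (ne_of_lt hala)
    refine ⟨by rw [hN]; rw [Fin.lt_def] at h1; omega, by simpa using (by omega : l < (a:ℕ)+1), ?_⟩
    intro k hk hkl
    simp only [(show ∀ x, π (π⁻¹ x) = x from fun x => by simp)]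
    by_contra hcon
    have hkne : π k ≠ a := by
      intro h
      have hh : π⁻¹ a = k := by rw [← h]; simp
      rw [hh] at hk; exact lt_irrefl _ hk
    have hak : π k < a := lt_of_le_of_ne (not_lt.mp hcon) hkne
    have hkla : la ≤ π k := by rw [Fin.le_def]; omega
    have := hfirst (π k) (Finset.mem_Icc.mpr ⟨hkla, le_of_lt hak⟩) (ne_of_lt hak)
    simp only [(show ∀ x, π⁻¹ (π x) = x from fun x => by simp)] at this
    exact absurd hk (not_lt.mpr (le_of_lt this))
  · intro r _; simp
  · intro a _; simp


lemma harm_tail (m : ℕ) : ∑ j ∈ range m, (1:ℝ)/((j : ℝ) + 2) = harm (m+1) - 1 := by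
  unfold harm
  rw [Finset.sum_range_succ']
  have h : ∑ j ∈ range m, (1:ℝ)/((j:ℝ)+2) = ∑ k ∈ range m, 1/((↑(k+1):ℝ)+1) :=
    Finset.sum_congr rfl fun j _ => by push_cast; ring
  rw [h]
  norm_num

lemma card_minus {l : ℕ} (hl1 : 1 ≤ l) (hln : l ≤ n) (a : Fin n) (hal : (a : ℕ) + 1 < l) :
    ((univ.filter fun π : Perm (Fin n) =>
        firstIn (Finset.Icc a ⟨l - 1, by omega⟩) a π).card : ℝ)
      = (Fintype.card (Perm (Fin n)) : ℝ) / ((l - (a : ℕ) : ℕ) : ℝ) := by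
  set la : Fin n := ⟨l - 1, by omega⟩ with hla
  have hmem : a ∈ Finset.Icc a la := Finset.mem_Icc.mpr ⟨le_refl a, by rw [Fin.le_def]; show (a : ℕ) ≤ l - 1; omega⟩
  have hcard : (Finset.Icc a la).card = l - (a : ℕ) := by
    rw [Fin.card_Icc]; show l - 1 + 1 - (a : ℕ) = l - (a : ℕ); omega
  have h := card_firstIn_mul (Finset.Icc a la) hmem
  rw [hcard] at h
  have hne : ((l - (a : ℕ) : ℕ) : ℝ) ≠ 0 := by
    have : 0 < l - (a : ℕ) := by omega
    positivity
  rw [eq_div_iff hne]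
  exact_mod_cast congrArg (Nat.cast : ℕ → ℝ) h

lemma card_plus {l : ℕ} (hl1 : 1 ≤ l) (hln : l ≤ n) (a : Fin n) (hal : l ≤ (a : ℕ)) :
    ((univ.filter fun π : Perm (Fin n) =>
        firstIn (Finset.Icc ⟨l - 1, by omega⟩ a) a π).card : ℝ)
      = (Fintype.card (Perm (Fin n)) : ℝ) / (((a : ℕ) + 2 - l : ℕ) : ℝ) := by
  set la : Fin n := ⟨l - 1, by omega⟩ with hla
  have hmem : a ∈ Finset.Icc la a := Finset.mem_Icc.mpr ⟨by rw [Fin.le_def]; show l - 1 ≤ (a : ℕ); omega, le_refl a⟩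
  have hcard : (Finset.Icc la a).card = (a : ℕ) + 2 - l := by
    rw [Fin.card_Icc]; show (a : ℕ) + 1 - (l - 1) = (a : ℕ) + 2 - l; omega
  have h := card_firstIn_mul (Finset.Icc la a) hmem
  rw [hcard] at h
  have hne : (((a : ℕ) + 2 - l : ℕ) : ℝ) ≠ 0 := by
    have : 0 < (a : ℕ) + 2 - l := by omega
    positivity
  rw [eq_div_iff hne]
  exact_mod_cast congrArg (Nat.cast : ℕ → ℝ) h

lemma sum_Rminus {l : ℕ} (hl1 : 1 ≤ l) (hln : l ≤ n) :
    ∑ π : Perm (Fin n), (bstRminus n l π : ℝ)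
      = (Fintype.card (Perm (Fin n)) : ℝ) * (harm l - 1) := by
  set C : ℝ := (Fintype.card (Perm (Fin n)) : ℝ) with hC
  calc ∑ π : Perm (Fin n), (bstRminus n l π : ℝ)
      = ∑ π : Perm (Fin n), ∑ a : Fin n,
          (if (a : ℕ) + 1 < l ∧ firstIn (Finset.Icc a ⟨l - 1, by omega⟩) a π then (1:ℝ) else 0) := by
        refine Finset.sum_congr rfl fun π _ => ?_
        rw [bstRminus_eq hl1 hln π, Finset.card_filter]
        push_cast
        rfl
    _ = ∑ a : Fin n, ∑ π : Perm (Fin n),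
          (if (a : ℕ) + 1 < l ∧ firstIn (Finset.Icc a ⟨l - 1, by omega⟩) a π then (1:ℝ) else 0) :=
        Finset.sum_comm
    _ = ∑ a : Fin n, (if (a : ℕ) + 1 < l then C / ((l - (a : ℕ) : ℕ) : ℝ) else 0) := by
        refine Finset.sum_congr rfl fun a _ => ?_
        by_cases hal : (a : ℕ) + 1 < l
        · rw [if_pos hal, ← card_minus hl1 hln a hal, Finset.card_filter]
          push_cast
          exact Finset.sum_congr rfl fun π _ => by simp [hal]
        · rw [if_neg hal]
          simp [hal]
    _ = ∑ a ∈ range n, (if a + 1 < l then C / ((l - a : ℕ) : ℝ) else 0) :=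
        Fin.sum_univ_eq_sum_range (fun a => if a + 1 < l then C / ((l - a : ℕ) : ℝ) else 0) n
    _ = ∑ a ∈ range (l-1), C / ((l - a : ℕ) : ℝ) := by
        rw [← Finset.sum_filter]
        refine Finset.sum_congr ?_ fun _ _ => rfl
        ext a; simp; omega
    _ = C * ∑ a ∈ range (l-1), (1:ℝ) / ((l - a : ℕ) : ℝ) := by
        rw [Finset.mul_sum]
        exact Finset.sum_congr rfl fun a _ => by ring
    _ = C * (harm l - 1) := by
        congr 1
        conv_rhs => rw [show l = (l - 1) + 1 by omega]
        rw [← harm_tail (l-1), ← Finset.sum_range_reflect]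
        refine Finset.sum_congr rfl fun j hj => ?_
        rw [Finset.mem_range] at hj
        have h1 : l - (l - 1 - 1 - j) = j + 2 := by omega
        rw [h1]
        push_cast
        ring
        
lemma sum_Rplus {l : ℕ} (hl1 : 1 ≤ l) (hln : l ≤ n) :
    ∑ π : Perm (Fin n), (bstRplus n l π : ℝ)
      = (Fintype.card (Perm (Fin n)) : ℝ) * (harm (n - l + 1) - 1) := by
  set C : ℝ := (Fintype.card (Perm (Fin n)) : ℝ) with hC
  calc ∑ π : Perm (Fin n), (bstRplus n l π : ℝ)
      = ∑ π : Perm (Fin n), ∑ a : Fin n,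
          (if l ≤ (a : ℕ) ∧ firstIn (Finset.Icc ⟨l - 1, by omega⟩ a) a π then (1:ℝ) else 0) := by
        refine Finset.sum_congr rfl fun π _ => ?_
        rw [bstRplus_eq hl1 hln π, Finset.card_filter]
        push_cast
        rfl
    _ = ∑ a : Fin n, ∑ π : Perm (Fin n),
          (if l ≤ (a : ℕ) ∧ firstIn (Finset.Icc ⟨l - 1, by omega⟩ a) a π then (1:ℝ) else 0) :=
        Finset.sum_comm
    _ = ∑ a : Fin n, (if l ≤ (a : ℕ) then C / (((a : ℕ) + 2 - l : ℕ) : ℝ) else 0) := by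
        refine Finset.sum_congr rfl fun a _ => ?_
        by_cases hal : l ≤ (a : ℕ)
        · rw [if_pos hal, ← card_plus hl1 hln a hal, Finset.card_filter]
          push_cast
          exact Finset.sum_congr rfl fun π _ => by simp [hal]
        · rw [if_neg hal]
          simp [hal]
    _ = ∑ a ∈ range n, (if l ≤ a then C / ((a + 2 - l : ℕ) : ℝ) else 0) :=
        Fin.sum_univ_eq_sum_range (fun a => if l ≤ a then C / ((a + 2 - l : ℕ) : ℝ) else 0) n
    _ = ∑ a ∈ Finset.Ico l n, C / ((a + 2 - l : ℕ) : ℝ) := by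
        rw [← Finset.sum_filter]
        refine Finset.sum_congr ?_ fun _ _ => rfl
        ext a; simp; omega
    _ = ∑ j ∈ range (n - l), C / ((l + j + 2 - l : ℕ) : ℝ) :=
        Finset.sum_Ico_eq_sum_range (fun a => C / ((a + 2 - l : ℕ) : ℝ)) l n
    _ = C * ∑ j ∈ range (n - l), (1:ℝ) / ((j : ℝ) + 2) := by
        rw [Finset.mul_sum]
        refine Finset.sum_congr rfl fun j _ => ?_
        have h1 : l + j + 2 - l = j + 2 := by omega
        rw [h1]
        push_cast
        ring
    _ = C * (harm (n - l + 1) - 1) := by rw [harm_tail]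


instance : MeasurableSingletonClass (Equiv.Perm (Fin n)) :=
  ⟨fun _ => MeasurableSpace.measurableSet_top⟩

lemma bstExp_eq (n l : ℕ) :
    bstExp n l = (Fintype.card (Perm (Fin n)) : ℝ)⁻¹
      * ∑ π : Perm (Fin n), (bstDepth n l π : ℝ) := by
  unfold bstExp uniformPerm
  rw [MeasureTheory.integral_fintype (.of_finite)]
  simp only [measureReal_def]
  have h : ∀ π : Perm (Fin n), ((PMF.uniformOfFintype (Perm (Fin n))).toMeasure {π}).toReal
      = (Fintype.card (Perm (Fin n)) : ℝ)⁻¹ := by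
    intro π
    rw [PMF.toMeasure_apply_singleton _ _ (MeasurableSpace.measurableSet_top),
      PMF.uniformOfFintype_apply]
    simp [ENNReal.toReal_inv]
  simp only [h, smul_eq_mul]
  rw [← Finset.mul_sum]

end AD
end

theorem arora_dent (n l : ℕ) (hn : 1 ≤ n) (hl : l ∈ Finset.Icc 1 n) :
    bstExp n l = harm l + harm (n + 1 - l) - 2 ∧
      1 + bstExp n l = harm l + harm (n + 1 - l) - 1 := by
  rw [Finset.mem_Icc] at hl
  obtain ⟨hl1, hln⟩ := hl
  have hC : (0:ℝ) < (Fintype.card (Equiv.Perm (Fin n)) : ℝ) :=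
    Nat.cast_pos.mpr Fintype.card_pos
  have key : bstExp n l = harm l + harm (n + 1 - l) - 2 := by
    rw [AD.bstExp_eq]
    have hsum : ∑ π : Equiv.Perm (Fin n), (bstDepth n l π : ℝ)
        = (Fintype.card (Equiv.Perm (Fin n)) : ℝ)
            * (harm l - 1 + (harm (n - l + 1) - 1)) := by
      unfold bstDepth
      push_cast
      rw [Finset.sum_add_distrib, AD.sum_Rminus hl1 hln, AD.sum_Rplus hl1 hln]
      ring
    rw [hsum, ← mul_assoc, inv_mul_cancel₀ (ne_of_gt hC), one_mul]
    have hnl : n + 1 - l = n - l + 1 := by omega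
    rw [hnl]
    ring
  exact ⟨key, by rw [key]; ring⟩
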